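/- Let two investors have equal initial wealth a > 0 and returns −1 < r₁ < r₂, let τ_k ∈ (0,1) be a capital income tax rate and τ_a ∈ (0,1) a wealth tax rate. Then: (i) the ratio of after-tax wealths under the wealth tax equals the pre-tax end-of-period ratio, ((1 − τ_a)(1 + r₂)a)/((1 − τ_a)(1 + r₁)a) = (1 + r₂)/(1 + r₁); and (ii) the ratio of after-tax wealths under the capital income tax is strictly compressed: 1 < (1 + (1 − τ_k)r₂)/(1 + (1 − τ_k)r₁) < (1 + r₂)/(1 + r₁). The stock tax preserves relative wealth positions while the flow tax strictly compresses them. -/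
import Mathlib

/-- The stock (wealth) tax preserves the ratio of after-tax wealths, while the
flow (capital income) tax strictly compresses it. -/
theorem stock_tax_preserves_flow_tax_compresses
    (a r₁ r₂ τk τa : ℝ) (ha : 0 < a) (hr₁ : -1 < r₁) (hr₁₂ : r₁ < r₂)
    (hτk : τk ∈ Set.Ioo (0 : ℝ) 1) (hτa : τa ∈ Set.Ioo (0 : ℝ) 1) :
    ((1 - τa) * (1 + r₂) * a) / ((1 - τa) * (1 + r₁) * a) = (1 + r₂) / (1 + r₁) ∧
    1 < (1 + (1 - τk) * r₂) / (1 + (1 - τk) * r₁) ∧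
    (1 + (1 - τk) * r₂) / (1 + (1 - τk) * r₁) < (1 + r₂) / (1 + r₁) := by
  obtain ⟨hk0, hk1⟩ := hτk
  obtain ⟨ha0, ha1⟩ := hτa
  have h1 : (0:ℝ) < 1 + r₁ := by linarith
  have h2 : (0:ℝ) < 1 + r₂ := by linarith
  have hk : (0:ℝ) < 1 - τk := by linarith
  have hd1 : (0:ℝ) < 1 + (1 - τk) * r₁ := by nlinarith
  have hd2 : (0:ℝ) < 1 + (1 - τk) * r₂ := by nlinarith
  refine ⟨?_, ?_, ?_⟩
  · rw [mul_div_mul_right _ _ ha.ne', mul_div_mul_left _ _ (by linarith : (1:ℝ) - τa ≠ 0)]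
  · rw [lt_div_iff₀ hd1]; nlinarith
  · rw [div_lt_div_iff₀ hd1 h1]; nlinarith
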